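/- Let G be a topological group and let U be a neighborhood of the identity element 1 such that U = U⁻¹ and (x·y)·(x·y) = 1 for all x, y ∈ U. Then the subgroup ⟨U⟩ generated by U is open (hence clopen) in G, is abelian, and every element h ∈ ⟨U⟩ satisfies h·h = 1; that is, ⟨U⟩ is an open Boolean subgroup of G. -/

import Mathlib

open Set Topology Pointwise

universe u v w

/-- A cozero set: the set where some continuous real-valued function is nonzero. -/
def IsCozeroSet {X : Type u} [TopologicalSpace X] (s : Set X) : Prop :=
  ∃ f : X → ℝ, Continuous f ∧ s = {x | f x ≠ 0}

/-- An F-space: any two disjoint cozero sets are completely separated. -/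
def IsFSpace (X : Type u) [TopologicalSpace X] : Prop :=
  ∀ s t : Set X, IsCozeroSet s → IsCozeroSet t → Disjoint s t →
    ∃ g : X → ℝ, Continuous g ∧ (∀ x, g x ∈ Set.Icc (0 : ℝ) 1) ∧
      (∀ x ∈ s, g x = 0) ∧ (∀ x ∈ t, g x = 1)

/-- An F'-space: any two disjoint cozero sets have disjoint closures. -/
def IsFPrimeSpace (X : Type u) [TopologicalSpace X] : Prop :=
  ∀ s t : Set X, IsCozeroSet s → IsCozeroSet t → Disjoint s t →
    Disjoint (closure s) (closure t)

/-- A basically disconnected space: the closure of every cozero set is open. -/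
def IsBasicallyDisconnected (X : Type u) [TopologicalSpace X] : Prop :=
  ∀ s : Set X, IsCozeroSet s → IsOpen (closure s)

/-- A P-space: every Gδ set is open. -/
def IsPSpace (X : Type u) [TopologicalSpace X] : Prop :=
  ∀ s : Set X, IsGδ s → IsOpen s

/-- Covering dimension at most `n`: every finite open cover has a finite open
refinement in which every point belongs to at most `n + 1` members. -/
def CovDimLE (X : Type u) [TopologicalSpace X] (n : ℕ) : Prop :=
  ∀ 𝒰 : Finset (Set X), (∀ U ∈ 𝒰, IsOpen U) → ⋃₀ (𝒰 : Set (Set X)) = Set.univ →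
    ∃ 𝒱 : Finset (Set X), (∀ V ∈ 𝒱, IsOpen V) ∧ ⋃₀ (𝒱 : Set (Set X)) = Set.univ ∧
      (∀ V ∈ 𝒱, ∃ U ∈ 𝒰, V ⊆ U) ∧
      ∀ x : X, {V : Set X | V ∈ 𝒱 ∧ x ∈ V}.ncard ≤ n + 1

/-- An ℝ-quotient map: a continuous surjection such that a real-valued function on the
target is continuous whenever its composition with the map is continuous. -/
def IsRQuotientMap {X : Type u} {Y : Type v} [TopologicalSpace X] [TopologicalSpace Y]
    (p : X → Y) : Prop :=
  Continuous p ∧ Function.Surjective p ∧ ∀ φ : Y → ℝ, Continuous (φ ∘ p) → Continuous φ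

/-- A non-P-point: a point having a Gδ set around it which is not a neighborhood of it. -/
def IsNonPPoint {X : Type u} [TopologicalSpace X] (x : X) : Prop :=
  ∃ s : Set X, IsGδ s ∧ x ∈ s ∧ s ∉ nhds x

/-- If `U` is a symmetric neighborhood of the identity such that `(x * y) ^ 2 = 1` for all
`x, y ∈ U`, then the subgroup generated by `U` is open (hence clopen), abelian, and Boolean. -/
theorem statement1 {G : Type u} [Group G] [TopologicalSpace G] [IsTopologicalGroup G]
    (U : Set G) (hU : U ∈ nhds (1 : G)) (hsymm : U⁻¹ = U)
    (hsq : ∀ x ∈ U, ∀ y ∈ U, (x * y) * (x * y) = 1) :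
    IsOpen ((Subgroup.closure U : Subgroup G) : Set G) ∧
    IsClosed ((Subgroup.closure U : Subgroup G) : Set G) ∧
    (∀ a ∈ Subgroup.closure U, ∀ b ∈ Subgroup.closure U, a * b = b * a) ∧
    (∀ h ∈ Subgroup.closure U, h * h = 1) := by
  have h1U : (1 : G) ∈ U := mem_of_mem_nhds hU
  have hinv : ∀ x ∈ U, x * x = 1 := by
    intro x hx
    have := hsq x hx 1 h1U
    simpa using this
  have hcomm : ∀ x ∈ U, ∀ y ∈ U, x * y = y * x := by
    intro x hx y hy
    have hxy := hsq x hx y hy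
    have hx2 := hinv x hx
    have hy2 := hinv y hy
    have hxinv : x⁻¹ = x := inv_eq_of_mul_eq_one_right hx2
    have hyinv : y⁻¹ = y := inv_eq_of_mul_eq_one_right hy2
    have : x * y = (x * y)⁻¹ := by
      rw [eq_inv_iff_mul_eq_one]; exact hxy
    rw [this, mul_inv_rev, hxinv, hyinv]
  have comm : ∀ a ∈ Subgroup.closure U, ∀ b ∈ Subgroup.closure U, a * b = b * a := by
    intro a ha
    refine Subgroup.closure_induction (fun x hx => ?_) (by simp) ?_ ?_ ha
    · intro b hb
      refine Subgroup.closure_induction (fun y hy => hcomm x hx y hy) (by simp) ?_ ?_ hb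
      · intro y z _ _ h1 h2
        rw [← mul_assoc, h1, mul_assoc, h2, mul_assoc]
      · intro y _ h
        calc x * y⁻¹ = y⁻¹ * (y * x) * y⁻¹ := by group
          _ = y⁻¹ * (x * y) * y⁻¹ := by rw [h]
          _ = y⁻¹ * x := by group
    · intro y z _ _ h1 h2 b hb
      rw [mul_assoc, h2 b hb, ← mul_assoc, h1 b hb, mul_assoc]
    · intro y _ h b hb
      have := h b hb
      calc y⁻¹ * b = y⁻¹ * (b * y) * y⁻¹ := by group
        _ = y⁻¹ * (y * b) * y⁻¹ := by rw [this]
        _ = b * y⁻¹ := by group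
  have bool : ∀ h ∈ Subgroup.closure U, h * h = 1 := by
    intro h hh
    induction hh using Subgroup.closure_induction with
    | mem x hx => exact hinv x hx
    | one => simp
    | mul x y hx hy ihx ihy =>
      have hyc : y ∈ Subgroup.closure U := hy
      have hxc : x ∈ Subgroup.closure U := hx
      have : x * y * (x * y) = x * (y * x) * y := by group
      rw [this, ← comm x hxc y hyc]
      calc x * (x * y) * y = (x * x) * (y * y) := by group
        _ = 1 := by rw [ihx, ihy]; simp
    | inv x hx ih =>
      have : x⁻¹ = x := inv_eq_of_mul_eq_one_right ih
      rw [this]; exact ih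
  have hopen : IsOpen ((Subgroup.closure U : Subgroup G) : Set G) :=
    Subgroup.isOpen_of_mem_nhds _ (Filter.mem_of_superset hU Subgroup.subset_closure)
  exact ⟨hopen, (Subgroup.closure U).isClosed_of_isOpen hopen , comm, bool⟩
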